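/- Let N be a tree-child time consistent hybridization network on taxa S and let i be a leaf. The leaf i is a tree node whose parent has no other child (so the reduction U(i) can be applied) if, and only if, ℓ_N(i,j) ≥ 2 for every leaf j ∈ S \ {i}, where ℓ_N(i,j) is the distance from the least common semi-strict ancestor [i,j] to i. -/

import Mathlib

open Classical

/-- A walk (path) in a digraph: a nonempty list of vertices with consecutive arcs. -/
def IsWalk {V : Type} (E : V → V → Prop) (p : List V) : Prop := p ≠ [] ∧ p.Chain' E

/-- A path with origin `u` and end `v`. -/
def WalkFromTo {V : Type} (E : V → V → Prop) (u v : V) (p : List V) : Prop :=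
  IsWalk E p ∧ p.head? = some u ∧ p.getLast? = some v

/-- `v` is a descendant of `u` (possibly trivial path from `u` to `v`). -/
def Desc {V : Type} (E : V → V → Prop) (u v : V) : Prop := Relation.ReflTransGen E u v

/-- A root: a node with no incoming arcs. -/
def IsRootNode {V : Type} (E : V → V → Prop) (r : V) : Prop := ∀ u, ¬ E u r

/-- `u` is a strict ancestor of `v`: `v` is a descendant of `u` and every path
from a root to `v` contains `u`. -/
def StrictAnc {V : Type} (E : V → V → Prop) (u v : V) : Prop :=
  Desc E u v ∧ ∀ (r : V) (p : List V), IsRootNode E r → WalkFromTo E r v p → u ∈ p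

/-- In-degree. -/
noncomputable def indeg {V : Type} (E : V → V → Prop) (v : V) : ℕ := {u | E u v}.ncard
/-- Out-degree. -/
noncomputable def outdeg {V : Type} (E : V → V → Prop) (v : V) : ℕ := {w | E v w}.ncard

/-- Tree node: in-degree at most 1. -/
def IsTreeNode {V : Type} (E : V → V → Prop) (v : V) : Prop := indeg E v ≤ 1
/-- Hybrid node: in-degree at least 2. -/
def IsHybrid {V : Type} (E : V → V → Prop) (v : V) : Prop := 2 ≤ indeg E v
/-- Leaf: no outgoing arcs. -/
def IsLeaf {V : Type} (E : V → V → Prop) (v : V) : Prop := ∀ w, ¬ E v w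

/-- Acyclicity: no non-trivial path from a node to itself. -/
def Acyclic {V : Type} (E : V → V → Prop) : Prop := ∀ v, ¬ Relation.TransGen E v v

/-- A hybridization network: a rooted DAG whose single root has out-degree > 1. -/
structure IsHybNet {V : Type} (E : V → V → Prop) (r : V) : Prop where
  acyclic : Acyclic E
  isRoot : IsRootNode E r
  uniqueRoot : ∀ x, IsRootNode E x → x = r
  rootOut : 2 ≤ outdeg E r

/-- Tree-child condition: every internal node has a tree-node child. -/
def TreeChild {V : Type} (E : V → V → Prop) : Prop :=
  ∀ v, ¬ IsLeaf E v → ∃ w, E v w ∧ IsTreeNode E w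

/-- Time consistency: a temporal representation exists. -/
def TimeConsistent {V : Type} (E : V → V → Prop) : Prop :=
  ∃ τ : V → ℕ, ∀ u v, E u v → (IsTreeNode E v → τ u < τ v) ∧ (IsHybrid E v → τ u = τ v)

/-- The leaves are bijectively labeled by `S` via `leaf`. -/
def LabelsLeaves {V S : Type} (E : V → V → Prop) (leaf : S → V) : Prop :=
  Function.Injective leaf ∧ (∀ s, IsLeaf E (leaf s)) ∧ ∀ v, IsLeaf E v → ∃ s, leaf s = v

/-- Distance: length of a shortest path from `u` to `v`. -/
noncomputable def dist {V : Type} (E : V → V → Prop) (u v : V) : ℕ :=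
  sInf {n | ∃ p, WalkFromTo E u v p ∧ p.length = n + 1}

/-- Height: largest length of a path from `v` to a leaf. -/
noncomputable def height {V : Type} (E : V → V → Prop) (v : V) : ℕ :=
  sSup {n | ∃ p w, WalkFromTo E v w p ∧ IsLeaf E w ∧ p.length = n + 1}

/-- Common ancestors of `u` and `v` that are strict ancestors of at least one of them. -/
def CSAset {V : Type} (E : V → V → Prop) (u v : V) : Set V :=
  {x | Desc E x u ∧ Desc E x v ∧ (StrictAnc E x u ∨ StrictAnc E x v)}

/-- `x` is a least common semi-strict ancestor of `u` and `v`. -/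
def IsLCSA {V : Type} (E : V → V → Prop) (u v x : V) : Prop :=
  x ∈ CSAset E u v ∧ ∀ y ∈ CSAset E u v, height E x ≤ height E y

/-- The least common semi-strict ancestor `[u,v]` (the root `r` witnesses nonemptiness). -/
noncomputable def lcsa {V : Type} (E : V → V → Prop) (r u v : V) : V :=
  @Classical.epsilon V ⟨r⟩ (IsLCSA E u v)

/-- `ℓ_N(u,v)`: the distance from `[u,v]` to `u`. -/
noncomputable def ell {V : Type} (E : V → V → Prop) (r u v : V) : ℕ :=
  dist E (lcsa E r u v) u

/-- `L_N(u,v) = ℓ_N(u,v) + ℓ_N(v,u)`: the LCSA-path length between `u` and `v`. -/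
noncomputable def pathLen {V : Type} (E : V → V → Prop) (r u v : V) : ℕ :=
  ell E r u v + ell E r v u

/-- `h_N(u,v)`: −1 if `[u,v]` is a strict ancestor of `u` only, 1 if of `v` only, 0 if of both. -/
noncomputable def hval {V : Type} (E : V → V → Prop) (r u v : V) : ℤ :=
  if StrictAnc E (lcsa E r u v) u then
    (if StrictAnc E (lcsa E r u v) v then 0 else -1)
  else 1

/-- Siblings: distinct nodes sharing a parent. -/
def Sibling {V : Type} (E : V → V → Prop) (u v : V) : Prop :=
  u ≠ v ∧ ∃ p, E p u ∧ E p v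

/-- A tree path: a non-trivial path whose end and intermediate nodes are tree nodes. -/
def TreePath {V : Type} (E : V → V → Prop) (p : List V) (u v : V) : Prop :=
  WalkFromTo E u v p ∧ 2 ≤ p.length ∧ ∀ w ∈ p.tail, IsTreeNode E w

/-- `v` is a tree descendant of `u`. -/
def TreeDesc {V : Type} (E : V → V → Prop) (u v : V) : Prop := ∃ p, TreePath E p u v

/-- Quasi-binary hybridization network. -/
def QuasiBinary {V : Type} (E : V → V → Prop) : Prop :=
  ∀ v : V, (indeg E v, outdeg E v) ∈ ({(0,2),(1,0),(1,2),(2,0),(2,1),(2,2)} : Set (ℕ × ℕ))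

/-- Fully resolved hybridization network node types. -/
def FullyResolvedHyb {V : Type} (E : V → V → Prop) : Prop :=
  ∀ v : V, (indeg E v, outdeg E v) ∈ ({(0,2),(1,0),(1,2),(2,0),(2,2)} : Set (ℕ × ℕ))

/-- Fully resolved phylogenetic network node types. -/
def FullyResolvedPhylo {V : Type} (E : V → V → Prop) : Prop :=
  ∀ v : V, (indeg E v, outdeg E v) ∈ ({(0,2),(1,0),(1,2),(2,1)} : Set (ℕ × ℕ))

/-- Phylogenetic network condition: every hybrid node has exactly one child, a tree node. -/
def PhyloNet {V : Type} (E : V → V → Prop) : Prop :=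
  ∀ v, IsHybrid E v → ∃ w, E v w ∧ IsTreeNode E w ∧ ∀ x, E v x → x = w

section Helpers

variable {V : Type} [Fintype V] {E : V → V → Prop}

lemma walk_singleton (a : V) : WalkFromTo E a a [a] :=
  ⟨⟨by simp, List.isChain_singleton a⟩, rfl, rfl⟩

lemma walk_concat {a b c : V} {p : List V} (hp : WalkFromTo E a b p) (h : E b c) :
    WalkFromTo E a c (p ++ [c]) := by
  obtain ⟨⟨hne, hch⟩, hh, hl⟩ := hp
  obtain ⟨x, t, rfl⟩ : ∃ x t, p = x :: t := by
    cases p with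
    | nil => exact absurd rfl hne
    | cons x t => exact ⟨x, t, rfl⟩
  have hxa : x = a := by simpa using hh
  subst hxa
  refine ⟨⟨by simp, ?_⟩, by simp, List.getLast?_concat⟩
  rw [List.Chain', List.isChain_append]
  refine ⟨hch, List.isChain_singleton c, ?_⟩
  intro y hy z hz
  simp only [List.head?_cons, Option.mem_def, Option.some.injEq] at hz
  rw [hl] at hy
  simp only [Option.mem_def, Option.some.injEq] at hy
  subst hy; subst hz; exact h

lemma walk_of_desc {a b : V} (h : Desc E a b) : ∃ p, WalkFromTo E a b p := by
  induction h with
  | refl => exact ⟨[a], walk_singleton a⟩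
  | tail hab hbc ih =>
    obtain ⟨p, hp⟩ := ih
    exact ⟨p ++ [_], walk_concat hp hbc⟩

lemma transGen_of_chain' {a x : V} {t : List V} (h : (a :: t).Chain' E) (hx : x ∈ t) :
    Relation.TransGen E a x := by
  induction t generalizing a with
  | nil => simp at hx
  | cons b t' ih =>
    rw [List.Chain', List.isChain_cons_cons] at h
    rw [List.mem_cons] at hx
    rcases hx with rfl | hx
    · exact Relation.TransGen.single h.1
    · exact Relation.TransGen.head h.1 (ih h.2 hx)

lemma walk_nodup (hac : Acyclic E) {p : List V} (hp : p.Chain' E) : p.Nodup := by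
  induction p with
  | nil => simp
  | cons a t ih =>
    refine List.nodup_cons.mpr ⟨fun hx => hac a (transGen_of_chain' hp hx), ih hp.tail⟩

/-- Decompose a walk of length ≥ 2 at its penultimate node. -/
lemma walk_snoc {p : List V} {a b : V} (hp : WalkFromTo E a b p) (hlen : 2 ≤ p.length) :
    ∃ q c, WalkFromTo E a c q ∧ E c b ∧ q.length + 1 = p.length := by
  obtain ⟨⟨hne, hch⟩, hh, hl⟩ := hp
  obtain ⟨y, t, rfl⟩ : ∃ y t, p = y :: t := by
    cases p with
    | nil => exact absurd rfl hne
    | cons y t => exact ⟨y, t, rfl⟩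
  obtain rfl : a = y := (by simpa using hh : y = a).symm
  clear hne hh
  induction t generalizing a with
  | nil => simp at hlen
  | cons z t' ih =>
    rw [List.Chain', List.isChain_cons_cons] at hch
    cases t' with
    | nil =>
      have hzb : z = b := by simpa using hl
      exact ⟨[a], a, walk_singleton a, hzb ▸ hch.1, by simp⟩
    | cons w t'' =>
      obtain ⟨q, c, hq, hcb, hqlen⟩ := ih (a := z) (by simp)
        hch.2 (by rw [← hl]; exact (List.getLast?_cons_cons ..).symm)
      obtain ⟨y2, s2, rfl⟩ : ∃ y2 s2, q = y2 :: s2 := by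
        cases q with
        | nil => exact absurd rfl hq.1.1
        | cons y2 s2 => exact ⟨y2, s2, rfl⟩
      obtain rfl : z = y2 := (by simpa using hq.2.1 : y2 = z).symm
      refine ⟨a :: z :: s2, c, ⟨⟨by simp, List.isChain_cons_cons.mpr ⟨hch.1, hq.1.2⟩⟩, by simp, ?_⟩,
        hcb, by simp at hqlen ⊢; omega⟩
      rw [List.getLast?_cons_cons]
      exact hq.2.2

/-- Concatenate two walks. -/
lemma walk_trans : ∀ {q : List V} {b c : V}, WalkFromTo E b c q → ∀ {a : V} {p : List V},
    WalkFromTo E a b p → ∃ s, WalkFromTo E a c s ∧ s.length + 1 = p.length + q.length := by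
  intro q
  induction q with
  | nil => intro b c hq; exact absurd rfl hq.1.1
  | cons y t ih =>
    intro b c hq a p hp
    have hyb : b = y := by
      have := hq.2.1
      simp at this
      exact this.symm
    subst hyb
    cases t with
    | nil =>
      have hbc : b = c := by simpa using hq.2.2
      subst hbc
      exact ⟨p, hp, by simp⟩
    | cons z t' =>
      have hch := hq.1.2
      rw [List.Chain', List.isChain_cons_cons] at hch
      have hq' : WalkFromTo E z c (z :: t') :=
        ⟨⟨by simp, hch.2⟩, by simp, by rw [← hq.2.2]; exact (List.getLast?_cons_cons ..).symm⟩
      obtain ⟨s, hs, hslen⟩ := ih hq' (walk_concat hp hch.1)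
      exact ⟨s, hs, by simp at hslen ⊢; omega⟩

lemma desc_of_walk {a b : V} {p : List V} (hp : WalkFromTo E a b p) : Desc E a b := by
  obtain ⟨⟨hne, hch⟩, hh, hl⟩ := hp
  obtain ⟨y, t, rfl⟩ : ∃ y t, p = y :: t := by
    cases p with
    | nil => exact absurd rfl hne
    | cons y t => exact ⟨y, t, rfl⟩
  obtain rfl : a = y := (by simpa using hh : y = a).symm
  clear hne hh
  induction t generalizing a with
  | nil =>
    have : a = b := by simpa using hl
    exact this ▸ Relation.ReflTransGen.refl
  | cons z t' ih =>
    rw [List.Chain', List.isChain_cons_cons] at hch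
    exact Relation.ReflTransGen.head hch.1
      (ih hch.2 (by rw [← hl]; exact (List.getLast?_cons_cons ..).symm))

lemma dist_exists {x y : V} (h : Desc E x y) :
    ∃ p, WalkFromTo E x y p ∧ p.length = dist E x y + 1 := by
  have hne : {n | ∃ p, WalkFromTo E x y p ∧ p.length = n + 1}.Nonempty := by
    obtain ⟨p, hp⟩ := walk_of_desc h
    have hpne : p ≠ [] := hp.1.1
    have : 1 ≤ p.length := List.length_pos_iff.mpr hpne
    exact ⟨p.length - 1, p, hp, by omega⟩
  exact Nat.sInf_mem hne

lemma dist_le {x y : V} {p : List V} (hp : WalkFromTo E x y p) : dist E x y ≤ p.length - 1 := by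
  have hpne : p ≠ [] := hp.1.1
  have h1 : 1 ≤ p.length := List.length_pos_iff.mpr hpne
  exact Nat.sInf_le ⟨p, hp, by omega⟩

lemma height_set_bdd (hac : Acyclic E) (v : V) :
    BddAbove {n | ∃ p w, WalkFromTo E v w p ∧ IsLeaf E w ∧ p.length = n + 1} := by
  refine ⟨Fintype.card V, fun n hn => ?_⟩
  obtain ⟨p, w, hp, _, hlen⟩ := hn
  have := (walk_nodup hac hp.1.2).length_le_card
  omega

lemma le_height (hac : Acyclic E) {v w : V} {p : List V}
    (hp : WalkFromTo E v w p) (hw : IsLeaf E w) : p.length ≤ height E v + 1 := by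
  have hpne : p ≠ [] := hp.1.1
  have h1 : 1 ≤ p.length := List.length_pos_iff.mpr hpne
  have : p.length - 1 ≤ height E v :=
    le_csSup (height_set_bdd hac v) ⟨p, w, hp, hw, by omega⟩
  omega

lemma height_exists (hac : Acyclic E) {v j : V} (hleaf : IsLeaf E j) (h : Desc E v j) :
    ∃ p w, WalkFromTo E v w p ∧ IsLeaf E w ∧ p.length = height E v + 1 := by
  have hne : {n | ∃ p w, WalkFromTo E v w p ∧ IsLeaf E w ∧ p.length = n + 1}.Nonempty := by
    obtain ⟨p, hp⟩ := walk_of_desc h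
    have hpne : p ≠ [] := hp.1.1
    have : 1 ≤ p.length := List.length_pos_iff.mpr hpne
    exact ⟨p.length - 1, p, j, hp, hleaf, by omega⟩
  exact Nat.sSup_mem hne (height_set_bdd hac v)

lemma height_lt (hac : Acyclic E) {x c : V} (hxc : Relation.TransGen E x c)
    {j : V} (hjleaf : IsLeaf E j) (hcj : Desc E c j) : height E c < height E x := by
  obtain ⟨q, w, hq, hw, hqlen⟩ := height_exists hac hjleaf hcj
  obtain ⟨p, hp⟩ := walk_of_desc hxc.to_reflTransGen
  have hxnec : x ≠ c := fun h => hac x (h ▸ hxc)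
  have hplen : 2 ≤ p.length := by
    rcases p with _ | ⟨a, _ | ⟨b, t⟩⟩
    · exact absurd rfl hp.1.1
    · exfalso
      have h1 : a = x := by simpa using hp.2.1
      have h2 : a = c := by simpa using hp.2.2
      exact hxnec (h1 ▸ h2)
    · simp only [List.length_cons]; omega
  obtain ⟨s, hs, hslen⟩ := walk_trans hq hp
  have := le_height hac hs hw
  omega

lemma wf_down (hac : Acyclic E) : WellFounded (fun a b : V => E b a) := by
  have hirr : IsIrrefl V (fun a b : V => Relation.TransGen E b a) := ⟨fun a h => hac a h⟩
  have htr : IsTrans V (fun a b : V => Relation.TransGen E b a) :=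
    ⟨fun a b c h1 h2 => Relation.TransGen.trans h2 h1⟩
  exact Subrelation.wf (fun h => Relation.TransGen.single h)
    (Finite.wellFounded_of_trans_of_irrefl _)

lemma wf_up (hac : Acyclic E) : WellFounded (fun a b : V => E a b) := by
  have hirr : IsIrrefl V (Relation.TransGen E) := ⟨fun a h => hac a h⟩
  exact Subrelation.wf (fun h => Relation.TransGen.single h)
    (Finite.wellFounded_of_trans_of_irrefl _)

lemma exists_parent {r : V} (hnet : IsHybNet E r) {v : V} (hv : v ≠ r) : ∃ u, E u v := by
  by_contra h
  push_neg at h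
  exact hv (hnet.uniqueRoot v fun u hu => h u hu)

lemma desc_root {r : V} (hnet : IsHybNet E r) (v : V) : Desc E r v := by
  induction v using (wf_up hnet.acyclic).induction with
  | _ x ih =>
    by_cases hx : x = r
    · exact hx ▸ Relation.ReflTransGen.refl
    · obtain ⟨u, hu⟩ := exists_parent hnet hx
      exact (ih u hu).tail hu

lemma strictAnc_root {r : V} (hnet : IsHybNet E r) (v : V) : StrictAnc E r v := by
  refine ⟨desc_root hnet v, fun r' p hr' hp => ?_⟩
  have : r' = r := hnet.uniqueRoot r' hr'
  subst this
  exact List.mem_of_mem_head? hp.2.1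

lemma exists_leaf_desc (hac : Acyclic E) (v : V) : ∃ j, IsLeaf E j ∧ Desc E v j := by
  induction v using (wf_down hac).induction with
  | _ x ih =>
    by_cases hx : IsLeaf E x
    · exact ⟨x, hx, Relation.ReflTransGen.refl⟩
    · have : ∃ w, E x w := by
        by_contra h; push_neg at h; exact hx h
      obtain ⟨w, hw⟩ := this
      obtain ⟨j, hj1, hj2⟩ := ih w hw
      exact ⟨j, hj1, hj2.head hw⟩

lemma parent_eq {u w v : V} (hv : IsTreeNode E v) (hu : E u v) (hw : E w v) : u = w := by
  have hfin : ({x | E x v} : Set V).Finite := Set.toFinite _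
  exact (Set.ncard_le_one hfin).mp hv u hu w hw

lemma desc_leaf {j v : V} (hj : IsLeaf E j) (h : Desc E j v) : v = j := by
  rcases Relation.ReflTransGen.cases_head h with rfl | ⟨c, hc, _⟩
  · rfl
  · exact absurd hc (hj c)

/-- One step of `E` into a tree node. -/
def TR (E : V → V → Prop) : V → V → Prop := fun a b => E a b ∧ IsTreeNode E b

lemma tree_reach_leaf (hac : Acyclic E) (htc : TreeChild E) (v : V) :
    ∃ j, Relation.ReflTransGen (TR E) v j ∧ IsLeaf E j ∧ (IsTreeNode E v → IsTreeNode E j) := by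
  induction v using (wf_down hac).induction with
  | _ x ih =>
    by_cases hx : IsLeaf E x
    · exact ⟨x, Relation.ReflTransGen.refl, hx, id⟩
    · obtain ⟨t, ht, htt⟩ := htc x hx
      obtain ⟨j, hj1, hj2, hj3⟩ := ih t ht
      exact ⟨j, Relation.ReflTransGen.head ⟨ht, htt⟩ hj1, hj2, fun _ => hj3 htt⟩

lemma mem_pred {a b : V} {p : List V} (hch : p.Chain' E) (hb : b ∈ p)
    (hhead : p.head? = some a) (hab : a ≠ b) : ∃ c ∈ p, E c b := by
  obtain ⟨q, s, rfl⟩ := List.append_of_mem hb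
  cases hq : q with
  | nil =>
    exfalso
    subst hq
    simp at hhead
    exact hab hhead.symm
  | cons y u =>
    subst hq
    rw [List.Chain', List.isChain_append] at hch
    have hlast := List.getLast?_eq_getLast (l := y :: u) (by simp)
    have harc := hch.2.2 _ hlast b (by simp)
    exact ⟨(y :: u).getLast (by simp), by
      refine List.mem_append.mpr (Or.inl ?_)
      exact List.getLast_mem _, harc⟩

lemma parent_mem_walk {r' v u j : V} {p : List V} (hr' : IsRootNode E r')
    (hp : WalkFromTo E r' j p) (hv : v ∈ p) (hvt : IsTreeNode E v) (hu : E u v) : u ∈ p := by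
  have hne : r' ≠ v := fun h => hr' u (h ▸ hu)
  obtain ⟨c, hc, hcb⟩ := mem_pred hp.1.2 hv hp.2.1 hne
  exact (parent_eq hvt hu hcb) ▸ hc

lemma mem_walk_of_treeReach {v j : V} (h : Relation.ReflTransGen (TR E) v j) :
    ∀ (r' : V) (p : List V), IsRootNode E r' → WalkFromTo E r' j p → v ∈ p := by
  induction h using Relation.ReflTransGen.head_induction_on with
  | refl =>
    intro r' p hr' hp
    exact List.mem_of_mem_getLast? hp.2.2
  | head hvb hbj ih =>
    intro r' p hr' hp
    exact parent_mem_walk hr' hp (ih r' p hr' hp) hvb.2 hvb.1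

lemma strictAnc_of_treeReach {u v j : V} (huv : E u v) (hv : IsTreeNode E v)
    (h : Relation.ReflTransGen (TR E) v j) : StrictAnc E u j := by
  constructor
  · exact Relation.ReflTransGen.head huv (Relation.ReflTransGen.mono (r := TR E) (p := E) (fun a b hab => hab.1) _ _ h)
  · intro r' p hr' hp
    exact parent_mem_walk hr' hp (mem_walk_of_treeReach h r' p hr' hp) hv huv

lemma lcsa_isLCSA {r : V} (hnet : IsHybNet E r) (u v : V) :
    IsLCSA E u v (lcsa E r u v) := by
  have hne : ∃ x, IsLCSA E u v x := by
    have hCSA : r ∈ CSAset E u v :=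
      ⟨desc_root hnet u, desc_root hnet v, Or.inl (strictAnc_root hnet u)⟩
    have hns : (height E '' CSAset E u v).Nonempty := ⟨_, ⟨r, hCSA, rfl⟩⟩
    obtain ⟨x, hx, hxe⟩ := Nat.sInf_mem hns
    exact ⟨x, hx, fun y hy => hxe ▸ Nat.sInf_le ⟨y, hy, rfl⟩⟩
  unfold lcsa
  exact Classical.epsilon_spec hne

end Helpers
/-- In a TCTC hybridization network, a leaf `i` is a tree node whose parent
has no other child iff `ℓ_N(i,j) ≥ 2` for every other leaf `j`. -/
theorem stmt13 {V : Type} [Fintype V] (E : V → V → Prop) (r : V)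
    (hnet : IsHybNet E r) (htc : TreeChild E) (hti : TimeConsistent E)
    (i : V) (hi : IsLeaf E i) :
    (IsTreeNode E i ∧ ∃ u, E u i ∧ ∀ w, E u w → w = i) ↔
      ∀ j, IsLeaf E j → j ≠ i → 2 ≤ ell E r i j := by
  have hac := hnet.acyclic
  constructor
  · rintro ⟨hitree, u, hui, huniq⟩ j hj hji
    have hL := lcsa_isLCSA hnet i j
    obtain ⟨x, hxeq⟩ : ∃ x, x = lcsa E r i j := ⟨_, rfl⟩
    rw [← hxeq] at hL
    obtain ⟨⟨hxi, hxj, _⟩, _⟩ := hL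
    -- descendants of u are only u and i
    have hdescu : ∀ v, Desc E u v → v = u ∨ v = i := by
      intro v hv
      induction hv with
      | refl => exact Or.inl rfl
      | tail hab hbc ih =>
        rcases ih with rfl | rfl
        · exact Or.inr (huniq _ hbc)
        · exact absurd hbc (hi _)
    have hxu : x ≠ u := by
      rintro rfl
      rcases hdescu j hxj with rfl | rfl
      · exact hj i hui
      · exact hji rfl
    have hxnei : x ≠ i := by
      rintro rfl
      exact hji (desc_leaf hi hxj)
    show 2 ≤ ell E r i j
    obtain ⟨p, hp, hplen⟩ := dist_exists hxi
    by_contra hlt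
    push_neg at hlt
    have hell_eq : ell E r i j = dist E x i := by rw [hxeq]; rfl
    have hp2 : p.length ≤ 2 := by omega
    rcases p with _ | ⟨a, _ | ⟨b, _ | ⟨c, t⟩⟩⟩
    · exact hp.1.1 rfl
    · have h1 : a = x := by simpa using hp.2.1
      have h2 : a = i := by simpa using hp.2.2
      exact hxnei (h1 ▸ h2)
    · have h1 : a = x := by simpa using hp.2.1
      have h2 : b = i := by simpa using hp.2.2
      have harc : E a b := (List.isChain_cons_cons.mp hp.1.2).1
      subst h1; subst h2
      exact hxu (parent_eq hitree harc hui)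
    · simp only [List.length_cons] at hp2; omega
  · intro hell
    -- i is not the root
    have hir : i ≠ r := by
      rintro rfl
      have h0 : ({w | E i w} : Set V) = ∅ := by
        ext w; simp [hi w]
      have := hnet.rootOut
      rw [outdeg, h0] at this
      simp at this
    obtain ⟨u0, hu0⟩ := exists_parent hnet hir
    -- a parent of i of minimal height
    obtain ⟨u, hu, humin⟩ : ∃ u, E u i ∧ ∀ q, E q i → height E u ≤ height E q := by
      have hns : (height E '' {q | E q i}).Nonempty := ⟨_, ⟨u0, hu0, rfl⟩⟩
      obtain ⟨u, hu, hue⟩ := Nat.sInf_mem hns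
      exact ⟨u, hu, fun q hq => hue ▸ Nat.sInf_le ⟨q, hq, rfl⟩⟩
    by_contra hcon
    push_neg at hcon
    -- find a suitable leaf j ≠ i with u ∈ CSAset E i j
    obtain ⟨j, hjleaf, hji, hCSA⟩ :
        ∃ j, IsLeaf E j ∧ j ≠ i ∧ u ∈ CSAset E i j := by
      by_cases hitree : IsTreeNode E i
      · -- i is a tree node: its parent u must have another child
        obtain ⟨w, huw, hwi⟩ := hcon hitree u hu
        obtain ⟨j, hjleaf, hwj⟩ := exists_leaf_desc hac w
        refine ⟨j, hjleaf, ?_, Relation.ReflTransGen.single hu,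
          Relation.ReflTransGen.head huw hwj, Or.inl
            (strictAnc_of_treeReach hu hitree Relation.ReflTransGen.refl)⟩
        intro he
        -- Desc w i with w ≠ i gives a cycle through u
        have hwj' : Desc E w i := he ▸ hwj
        have htg : Relation.TransGen E w i := by
          rcases Relation.ReflTransGen.cases_head hwj' with he2 | ⟨c, hc, hcj⟩
          · exact absurd he2 hwi
          · exact Relation.TransGen.head' hc hcj
        obtain ⟨b, hwb, hbi⟩ := Relation.TransGen.tail'_iff.mp htg
        have hbu : b = u := parent_eq hitree hbi hu
        exact hac w (Relation.TransGen.tail' (hbu ▸ hwb) huw)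
      · -- i is a hybrid node: take a tree child of u and follow tree nodes to a leaf
        have hune : ¬ IsLeaf E u := fun h => h i hu
        obtain ⟨t, hut, htt⟩ := htc u hune
        obtain ⟨j, hreach, hjleaf, hjtree⟩ := tree_reach_leaf hac htc t
        have hSA := strictAnc_of_treeReach hut htt hreach
        refine ⟨j, hjleaf, ?_, Relation.ReflTransGen.single hu, hSA.1, Or.inr hSA⟩
        rintro rfl
        exact hitree (hjtree htt)
    -- now derive a contradiction from ℓ(i,j) ≥ 2
    have h2 := hell j hjleaf hji
    have hL := lcsa_isLCSA hnet i j
    obtain ⟨x, hxeq⟩ : ∃ x, x = lcsa E r i j := ⟨_, rfl⟩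
    rw [← hxeq] at hL
    obtain ⟨⟨hxi, hxj, _⟩, hmin⟩ := hL
    have hxht : height E x ≤ height E u := hmin u hCSA
    have hxnei : x ≠ i := by
      rintro rfl
      exact hji (desc_leaf hi hxj)
    obtain ⟨p, hp, hplen⟩ := dist_exists hxi
    have hell_eq : ell E r i j = dist E x i := by rw [hxeq]; rfl
    have hplen2 : 2 ≤ p.length := by omega
    obtain ⟨q, c, hq, hci, hqlen⟩ := walk_snoc hp hplen2
    by_cases hxc : x = c
    · -- then E x i, so dist ≤ 1
      subst hxc
      have := dist_le (walk_concat (walk_singleton x) hci)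
      simp at this
      omega
    · -- q is a walk from x to c of length ≥ 2, giving TransGen x c
      obtain ⟨y, s, rfl⟩ : ∃ y s, q = y :: s := by
        cases q with
        | nil => exact absurd rfl hq.1.1
        | cons y s => exact ⟨y, s, rfl⟩
      obtain rfl : x = y := (by simpa using hq.2.1 : y = x).symm
      have hcq : c ∈ x :: s := List.mem_of_mem_getLast? hq.2.2
      have hcs : c ∈ s := by
        rcases List.mem_cons.mp hcq with rfl | hcs
        · exact absurd rfl hxc
        · exact hcs
      have htg : Relation.TransGen E x c := transGen_of_chain' hq.1.2 hcs
      have hlt := height_lt hac htg hi (Relation.ReflTransGen.single hci)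
      have := humin c hci
      omega
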